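/- Let v₁ = (0,0,0), v₂ = (1000,0,0), v₃ = (26,228,0), v₄ = (476,−198,785), v₅ = (548,659,276), v₆ = (−97,−18,−77), v₇ = (841,171,212), v₈ = (356,358,−642), v₉ = (89,68,277), v₁₀ = (632,742,−224) in ℝ³, and define edge vectors eᵢ = v_{i+1} − vᵢ for i = 1, …, 9 and e₁₀ = v₁ − v₁₀. Then there is no w ∈ ℝ³ such that (−1)^{i+1} (w · eᵢ) > 0 for every i ∈ {1, …, 10}. -/
import Mathlib

/-- The vertices of the paper's 10-stick polygonal realization of the knot `8_7`.
Here `vert8_7 i` is the paper's vertex `v_(i+1)`. -/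
noncomputable def vert8_7 : Fin 10 → (Fin 3 → ℝ) :=
  ![![0, 0, 0], ![1000, 0, 0], ![26, 228, 0], ![476, -198, 785], ![548, 659, 276], ![-97, -18, -77], ![841, 171, 212], ![356, 358, -642], ![89, 68, 277], ![632, 742, -224]]

/-- The edge vectors `eᵢ = v_(i+1) − vᵢ` (cyclically, so `e₁₀ = v₁ − v₁₀`);
here `edge8_7 i` is the paper's `e_(i+1)`, using wrap-around addition on `Fin 10`. -/
noncomputable def edge8_7 (i : Fin 10) : Fin 3 → ℝ :=
  vert8_7 (i + 1) - vert8_7 i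

/-- There is no `w ∈ ℝ³` such that `(−1)^(i+1) (w · eᵢ) > 0` for every
`i ∈ {1, …, 10}`: no projection of this polygon (the knot `8_7`) to a line has
5 local maxima. (With 0-based indexing `i : Fin 10`, the sign is `(−1)^i`.) -/
theorem no_alternating_direction_8_7 :
    ¬ ∃ w : Fin 3 → ℝ, ∀ i : Fin 10,
        0 < (-1 : ℝ) ^ (i : ℕ) * ∑ j : Fin 3, w j * edge8_7 i j := by
  rintro ⟨w, h⟩
  have h0 := h 0
  have h2 := h 2
  have h5 := h 5
  have h8 := h 8
  simp only [edge8_7, Fin.sum_univ_three, Pi.sub_apply,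
    show (0:Fin 10) + 1 = 1 from rfl, show (2:Fin 10) + 1 = 3 from rfl,
    show (5:Fin 10) + 1 = 6 from rfl, show (8:Fin 10) + 1 = 9 from rfl,
    show vert8_7 0 0 = 0 from rfl,
    show vert8_7 0 1 = 0 from rfl,
    show vert8_7 0 2 = 0 from rfl,
    show vert8_7 1 0 = 1000 from rfl,
    show vert8_7 1 1 = 0 from rfl,
    show vert8_7 1 2 = 0 from rfl,
    show vert8_7 2 0 = 26 from rfl,
    show vert8_7 2 1 = 228 from rfl,
    show vert8_7 2 2 = 0 from rfl,
    show vert8_7 3 0 = 476 from rfl,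
    show vert8_7 3 1 = (-198) from rfl,
    show vert8_7 3 2 = 785 from rfl,
    show vert8_7 5 0 = (-97) from rfl,
    show vert8_7 5 1 = (-18) from rfl,
    show vert8_7 5 2 = (-77) from rfl,
    show vert8_7 6 0 = 841 from rfl,
    show vert8_7 6 1 = 171 from rfl,
    show vert8_7 6 2 = 212 from rfl,
    show vert8_7 8 0 = 89 from rfl,
    show vert8_7 8 1 = 68 from rfl,
    show vert8_7 8 2 = 277 from rfl,
    show vert8_7 9 0 = 632 from rfl,
    show vert8_7 9 1 = 742 from rfl,
    show vert8_7 9 2 = (-224) from rfl] at h0 h2 h5 h8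
  simp only [show ((5:Fin 10):ℕ) = 5 from rfl, show ((8:Fin 10):ℕ) = 8 from rfl] at h5 h8
  norm_num at h0 h2 h5 h8
  linarith [h0, h2, h5, h8]
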